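/- ∫₀^1 (−log y / y) · sech((π/2) log y) dy = 8G/π², where G is Catalan's constant. -/

import Mathlib

open MeasureTheory Set Real

private lemma exp_neg_image : (fun x : ℝ => Real.exp (-x)) '' Set.Ioi 0 = Set.Ioo (0:ℝ) 1 := by
  ext y
  constructor
  · rintro ⟨x, hx, rfl⟩
    exact ⟨Real.exp_pos _, Real.exp_lt_one_iff.mpr (by simpa using hx)⟩
  · intro hy
    exact ⟨-Real.log y, by simpa using Real.log_neg hy.1 hy.2,
      by simp [Real.exp_log hy.1]⟩

private lemma exp_neg_deriv : ∀ x ∈ Set.Ioi (0:ℝ),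
    HasDerivWithinAt (fun x : ℝ => Real.exp (-x)) (-Real.exp (-x)) (Set.Ioi 0) x := by
  intro x _
  simpa [Function.comp_def] using ((Real.hasDerivAt_exp (-x)).comp x (hasDerivAt_neg x)).hasDerivWithinAt

private lemma exp_neg_injOn : Set.InjOn (fun x : ℝ => Real.exp (-x)) (Set.Ioi 0) :=
  fun x _ y _ h => by simpa using Real.exp_injective h

private lemma rhs_eqOn {b : ℝ} : ∀ x ∈ Set.Ioi (0:ℝ),
    |(-Real.exp (-x))| • ((-Real.log (Real.exp (-x))) * Real.exp (-x) ^ (b - 1))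
      = x ^ ((2:ℝ) - 1) * Real.exp (-(b * x)) := by
  intro x _
  rw [abs_neg, abs_of_pos (Real.exp_pos _), Real.log_exp, neg_neg, smul_eq_mul,
    Real.rpow_def_of_pos (Real.exp_pos _), Real.log_exp]
  rw [show ((2:ℝ) - 1) = 1 by norm_num, Real.rpow_one, ← mul_assoc, mul_comm (Real.exp (-x)) x,
    mul_assoc, ← Real.exp_add]
  ring_nf

private lemma keyIntegrable {b : ℝ} (hb : 0 < b) :
    IntegrableOn (fun y : ℝ => (-Real.log y) * y ^ (b - 1)) (Set.Ioo 0 1) := by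
  rw [← exp_neg_image,
    integrableOn_image_iff_integrableOn_abs_deriv_smul measurableSet_Ioi exp_neg_deriv exp_neg_injOn]
  have h := integrableOn_rpow_mul_exp_neg_mul_rpow (p := 1) (s := 1) (by norm_num) one_pos hb
  refine (h.congr_fun (fun x hx => ?_) measurableSet_Ioi).congr_fun
    (fun x hx => (rhs_eqOn x hx).symm) measurableSet_Ioi
  rw [Real.rpow_one, show ((2:ℝ) - 1) = 1 by norm_num, Real.rpow_one, neg_mul]

private lemma keyA {b : ℝ} (hb : 0 < b) :
    ∫ y in Set.Ioo (0:ℝ) 1, (-Real.log y) * y ^ (b - 1) = 1 / b ^ 2 := by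
  rw [← exp_neg_image,
    integral_image_eq_integral_abs_deriv_smul measurableSet_Ioi exp_neg_deriv exp_neg_injOn,
    setIntegral_congr_fun measurableSet_Ioi rhs_eqOn,
    integral_rpow_mul_exp_neg_mul_Ioi two_pos hb, Real.Gamma_two, mul_one,
    show ((2:ℝ)) = ((2:ℕ):ℝ) by norm_num, Real.rpow_natCast, div_pow, one_pow]

theorem neg_log_change_of_variable :
    ∫ y in (0:ℝ)..1,
        (-Real.log y / y) *
          (2 / (Real.exp (Real.pi / 2 * Real.log y) + Real.exp (-(Real.pi / 2 * Real.log y))))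
      = 8 * (∑' k : ℕ, (-1 : ℝ) ^ k / (1 + 2 * (k : ℝ)) ^ 2) / Real.pi ^ 2 := by
  set b : ℕ → ℝ := fun k => (2 * (k:ℝ) + 1) * (Real.pi / 2) with hbdef
  have hb' : ∀ k, b k = (2 * (k:ℝ) + 1) * (Real.pi / 2) := fun k => rfl
  have hbpos : ∀ k, 0 < b k := by
    intro k
    have : (0:ℝ) < 2 * (k:ℝ) + 1 := by positivity
    exact mul_pos this (by positivity)
  set F : ℕ → ℝ → ℝ := fun k y => ((-1:ℝ) ^ k * 2) * ((-Real.log y) * y ^ (b k - 1)) with hFdef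
  -- pointwise identity
  have key : ∀ y ∈ Set.Ioo (0:ℝ) 1,
      (-Real.log y / y) *
          (2 / (Real.exp (Real.pi / 2 * Real.log y) + Real.exp (-(Real.pi / 2 * Real.log y))))
        = ∑' k, F k y := by
    intro y hy
    obtain ⟨hy0, hy1⟩ := hy
    have hyp : y ^ Real.pi < 1 := Real.rpow_lt_one hy0.le hy1 Real.pi_pos
    have hyppos : 0 < y ^ Real.pi := Real.rpow_pos_of_pos hy0 _
    set t : ℝ := y ^ (Real.pi / 2) with htdef
    have ht : 0 < t := Real.rpow_pos_of_pos hy0 _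
    have htt : t * t = y ^ Real.pi := by
      rw [htdef, ← Real.rpow_add hy0]; norm_num
    have he1 : Real.exp (Real.pi / 2 * Real.log y) = t := by
      rw [htdef, Real.rpow_def_of_pos hy0, mul_comm]
    have he2 : Real.exp (-(Real.pi / 2 * Real.log y)) = t⁻¹ := by
      rw [Real.exp_neg, he1]
    have hterm : ∀ k : ℕ, F k y
        = (2 * (-Real.log y) * y ^ (Real.pi / 2 - 1)) * (-(y ^ Real.pi)) ^ k := by
      intro k
      have h1 : y ^ (b k - 1) = y ^ (Real.pi * k) * y ^ (Real.pi / 2 - 1) := by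
        rw [← Real.rpow_add hy0]; congr 1; rw [hbdef]; ring
      have h2 : y ^ (Real.pi * k) = (y ^ Real.pi) ^ k := by
        rw [Real.rpow_mul hy0.le, Real.rpow_natCast]
      simp only [hFdef]
      rw [h1, h2, neg_pow]
      ring
    rw [tsum_congr hterm, tsum_mul_left, tsum_geometric_of_norm_lt_one (by
      rw [norm_neg, Real.norm_eq_abs, abs_of_pos hyppos]; exact hyp), sub_neg_eq_add]
    have hys : y ^ (Real.pi / 2 - 1) = t / y := by
      rw [htdef, Real.rpow_sub hy0, Real.rpow_one]
    rw [he1, he2, hys, ← htt]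
    have hne : t + t⁻¹ ≠ 0 := by positivity
    have h1tt : (1 : ℝ) + t * t ≠ 0 := by positivity
    field_simp
    ring
  have hInt : ∀ k, Integrable (F k) (volume.restrict (Set.Ioo (0:ℝ) 1)) := by
    intro k
    exact (keyIntegrable (hbpos k)).const_mul _
  have hnorm : ∀ k, ∫ y in Set.Ioo (0:ℝ) 1, ‖F k y‖ = 2 * (1 / (b k) ^ 2) := by
    intro k
    have : ∀ y ∈ Set.Ioo (0:ℝ) 1, ‖F k y‖ = 2 * ((-Real.log y) * y ^ (b k - 1)) := by
      intro y hy
      have hlog : Real.log y < 0 := Real.log_neg hy.1 hy.2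
      have hpow : (0:ℝ) ≤ y ^ (b k - 1) := (Real.rpow_pos_of_pos hy.1 _).le
      simp only [hFdef]
      rw [Real.norm_eq_abs, abs_mul, abs_mul, abs_pow, abs_neg, abs_one, one_pow,
        one_mul, abs_mul, abs_of_nonneg (by linarith : (0:ℝ) ≤ -Real.log y),
        abs_of_nonneg hpow, abs_two]
    rw [setIntegral_congr_fun measurableSet_Ioo this, integral_const_mul, keyA (hbpos k)]
  have hSum : Summable fun k => ∫ y in Set.Ioo (0:ℝ) 1, ‖F k y‖ := by
    have hs : Summable fun k : ℕ => 2 * (1 / ((k:ℝ) + 1) ^ 2) := by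
      have h0 : Summable fun n : ℕ => 1 / (n:ℝ) ^ 2 :=
        Real.summable_one_div_nat_pow.mpr one_lt_two
      have h1 := (summable_nat_add_iff 1).mpr h0
      exact (h1.congr (fun n => by push_cast; ring)).mul_left 2
    refine Summable.of_nonneg_of_le (fun k => ?_) (fun k => ?_) hs
    · rw [hnorm k]; positivity
    · rw [hnorm k]
      have hple : ((k:ℝ) + 1) ^ 2 ≤ (b k) ^ 2 := by
        have hpi : (3:ℝ) < Real.pi := Real.pi_gt_three
        have hk : (0:ℝ) ≤ (k:ℝ) := Nat.cast_nonneg k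
        rw [hb']
        have h2 : (k:ℝ) + 1 ≤ (2 * (k:ℝ) + 1) * (Real.pi / 2) := by nlinarith
        exact pow_le_pow_left₀ (by positivity) h2 2
      have := one_div_le_one_div_of_le (by positivity : (0:ℝ) < ((k:ℝ)+1)^2) hple
      linarith
  rw [intervalIntegral.integral_of_le zero_le_one, MeasureTheory.integral_Ioc_eq_integral_Ioo,
    setIntegral_congr_fun measurableSet_Ioo key,
    ← integral_tsum_of_summable_integral_norm hInt hSum]
  have hterm : ∀ k : ℕ, (∫ y in Set.Ioo (0:ℝ) 1, F k y)
      = (8 / Real.pi ^ 2) * ((-1:ℝ) ^ k / (1 + 2 * (k:ℝ)) ^ 2) := by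
    intro k
    simp only [hFdef]
    rw [integral_const_mul, keyA (hbpos k), hb']
    have hpi : Real.pi ≠ 0 := Real.pi_ne_zero
    have hk : (1 + 2 * (k:ℝ)) ≠ 0 := by positivity
    field_simp
    ring
  rw [tsum_congr hterm, tsum_mul_left]
  ring
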